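/- Let U ∈ U(N) be a local maximizer of the 1-norm on the unitary group U(N), i.e. there is a neighborhood of U in U(N) on which every unitary V satisfies ‖V‖₁ ≤ ‖U‖₁. Then all entries of U are nonzero: U_{ij} ≠ 0 for all i,j. -/

import Mathlib

open Finset in
lemma sum_comb (N : ℕ) (f g f' g' : Fin N → ℂ) (p q p' q' : ℂ) :
    ∑ j, (p * f j + q * g j) * (starRingEnd ℂ) (p' * f' j + q' * g' j)
      = p * (starRingEnd ℂ) p' * ∑ j, f j * (starRingEnd ℂ) (f' j)
      + p * (starRingEnd ℂ) q' * ∑ j, f j * (starRingEnd ℂ) (g' j)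
      + q * (starRingEnd ℂ) p' * ∑ j, g j * (starRingEnd ℂ) (f' j)
      + q * (starRingEnd ℂ) q' * ∑ j, g j * (starRingEnd ℂ) (g' j) := by
  simp only [Finset.mul_sum, ← Finset.sum_add_distrib]
  exact Finset.sum_congr rfl fun j _ => by simp only [map_add, map_mul]; ring

-- row orthonormality from unitarity
lemma urow (N : ℕ) (U : Matrix (Fin N) (Fin N) ℂ) (hU : U ∈ Matrix.unitaryGroup (Fin N) ℂ) :
    ∀ a b, ∑ j, U a j * (starRingEnd ℂ) (U b j) = if a = b then (1:ℂ) else 0 := by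
  intro a b
  have h1 := Matrix.mem_unitaryGroup_iff.mp hU
  have := congrFun (congrFun h1 a) b
  simpa [Matrix.mul_apply, Matrix.star_apply, Complex.star_def, Matrix.one_apply] using this

lemma sum_comb1 (N : ℕ) (f f' g' : Fin N → ℂ) (p' q' : ℂ) :
    ∑ j, f j * (starRingEnd ℂ) (p' * f' j + q' * g' j)
      = (starRingEnd ℂ) p' * ∑ j, f j * (starRingEnd ℂ) (f' j)
      + (starRingEnd ℂ) q' * ∑ j, f j * (starRingEnd ℂ) (g' j) := by
  simp only [Finset.mul_sum, ← Finset.sum_add_distrib]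
  exact Finset.sum_congr rfl fun j _ => by simp only [map_add, map_mul]; ring

lemma sum_comb2 (N : ℕ) (f g h : Fin N → ℂ) (p q : ℂ) :
    ∑ j, (p * f j + q * g j) * (starRingEnd ℂ) (h j)
      = p * ∑ j, f j * (starRingEnd ℂ) (h j) + q * ∑ j, g j * (starRingEnd ℂ) (h j) := by
  simp only [Finset.mul_sum, ← Finset.sum_add_distrib]
  exact Finset.sum_congr rfl fun j _ => by ring

noncomputable def rotM (N : ℕ) (U : Matrix (Fin N) (Fin N) ℂ) (i0 i1 : Fin N) (t : ℝ) :
    Matrix (Fin N) (Fin N) ℂ :=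
  Matrix.of fun i j =>
    if i = i0 then (Real.cos t : ℂ) * U i0 j + (Real.sin t : ℂ) * U i1 j
    else if i = i1 then (Real.cos t : ℂ) * U i1 j - (Real.sin t : ℂ) * U i0 j
    else U i j

lemma rotM_i0 (N : ℕ) (U : Matrix (Fin N) (Fin N) ℂ) (i0 i1 : Fin N) (t : ℝ) (j : Fin N) :
    rotM N U i0 i1 t i0 j = (Real.cos t : ℂ) * U i0 j + (Real.sin t : ℂ) * U i1 j := by
  simp only [rotM, Matrix.of_apply, eq_self_iff_true, if_true]

lemma rotM_i1 (N : ℕ) (U : Matrix (Fin N) (Fin N) ℂ) (i0 i1 : Fin N) (hne : i1 ≠ i0) (t : ℝ)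
    (j : Fin N) :
    rotM N U i0 i1 t i1 j = (-(Real.sin t : ℂ)) * U i0 j + (Real.cos t : ℂ) * U i1 j := by
  simp only [rotM, Matrix.of_apply, if_neg hne, eq_self_iff_true, if_true]; ring

lemma rotM_other (N : ℕ) (U : Matrix (Fin N) (Fin N) ℂ) (i0 i1 : Fin N) (t : ℝ) (a : Fin N)
    (h0 : a ≠ i0) (h1 : a ≠ i1) (j : Fin N) :
    rotM N U i0 i1 t a j = U a j := by
  simp only [rotM, Matrix.of_apply, if_neg h0, if_neg h1]

lemma rotM_mem (N : ℕ) (U : Matrix (Fin N) (Fin N) ℂ)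
    (hU : U ∈ Matrix.unitaryGroup (Fin N) ℂ) (i0 i1 : Fin N) (hne : i1 ≠ i0) (t : ℝ) :
    rotM N U i0 i1 t ∈ Matrix.unitaryGroup (Fin N) ℂ := by
  have hrow := urow N U hU
  have hcs : ((Real.cos t : ℂ)) * (Real.cos t : ℂ) + (Real.sin t : ℂ) * (Real.sin t : ℂ) = 1 := by
    have h : Real.cos t * Real.cos t + Real.sin t * Real.sin t = 1 := by
      nlinarith [Real.sin_sq_add_cos_sq t]
    exact_mod_cast h
  rw [Matrix.mem_unitaryGroup_iff]
  ext a b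
  rw [Matrix.mul_apply, Matrix.one_apply]
  simp only [Matrix.star_apply, Complex.star_def]
  by_cases ha0 : a = i0
  · by_cases hb0 : b = i0
    · simp only [ha0, hb0, rotM_i0, sum_comb, hrow, Complex.conj_ofReal]
      simp only [eq_self_iff_true, if_true, if_neg hne, if_neg (Ne.symm hne : i0 ≠ i1)]
      linear_combination hcs
    · by_cases hb1 : b = i1
      · simp only [ha0, hb1, rotM_i0, rotM_i1 N U i0 i1 hne, sum_comb, hrow,
          Complex.conj_ofReal, map_neg]
        simp only [eq_self_iff_true, if_true, if_neg hne, if_neg (Ne.symm hne : i0 ≠ i1)]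
        ring
      · simp only [ha0, rotM_i0, rotM_other N U i0 i1 t b hb0 hb1, sum_comb2, hrow]
        simp only [if_neg (Ne.symm hb0 : i0 ≠ b), if_neg (fun h => hb1 h.symm : ¬ i1 = b),
          if_neg (fun h => hb0 (ha0 ▸ h.symm) : ¬ i0 = b)]
        ring
  · by_cases ha1 : a = i1
    · by_cases hb0 : b = i0
      · simp only [ha1, hb0, rotM_i1 N U i0 i1 hne, rotM_i0, sum_comb, hrow,
          Complex.conj_ofReal, map_neg]
        simp only [eq_self_iff_true, if_true, if_neg hne, if_neg (Ne.symm hne : i0 ≠ i1)]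
        ring
      · by_cases hb1 : b = i1
        · simp only [ha1, hb1, rotM_i1 N U i0 i1 hne, sum_comb, hrow, Complex.conj_ofReal,
            map_neg]
          simp only [eq_self_iff_true, if_true, if_neg hne, if_neg (Ne.symm hne : i0 ≠ i1)]
          linear_combination hcs
        · simp only [ha1, rotM_i1 N U i0 i1 hne, rotM_other N U i0 i1 t b hb0 hb1, sum_comb2,
            hrow]
          simp only [if_neg (Ne.symm hb0 : i0 ≠ b), if_neg (fun h => hb1 h.symm : ¬ i1 = b)]
          ring
    · simp only [rotM_other N U i0 i1 t a ha0 ha1]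
      by_cases hb0 : b = i0
      · simp only [hb0, rotM_i0, sum_comb1, hrow, Complex.conj_ofReal]
        simp only [if_neg ha0, if_neg ha1]
        ring
      · by_cases hb1 : b = i1
        · simp only [hb1, rotM_i1 N U i0 i1 hne, sum_comb1, hrow, Complex.conj_ofReal,
            map_neg]
          simp only [if_neg ha0, if_neg ha1]
          ring
        · simp only [rotM_other N U i0 i1 t b hb0 hb1, hrow]

lemma entry_le (N : ℕ) (U : Matrix (Fin N) (Fin N) ℂ)
    (hU : U ∈ Matrix.unitaryGroup (Fin N) ℂ) (a b : Fin N) : ‖U a b‖ ≤ 1 := by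
  have h := urow N U hU a a
  rw [if_pos rfl] at h
  simp only [Complex.mul_conj] at h
  rw [← Complex.ofReal_sum] at h
  have h2 : ∑ j, Complex.normSq (U a j) = 1 := by exact_mod_cast h
  have h3 : Complex.normSq (U a b) ≤ 1 :=
    h2 ▸ Finset.single_le_sum (fun j _ => Complex.normSq_nonneg (U a j)) (Finset.mem_univ b)
  have h4 := Complex.sq_norm (U a b)
  nlinarith [norm_nonneg (U a b)]

lemma arith_final (S m t c s : ℝ) (hS0 : 0 ≤ S) (hm : 0 < m) (ht0 : 0 < t)
    (htm : t * (2*(S+1)) ≤ m) (hsinlb : 3/4*t ≤ s) (hcosub : 1 - c ≤ t^2) :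
    2*S < 2*c*S + 2*s*m := by
  nlinarith [mul_le_mul_of_nonneg_left htm ht0.le, mul_le_mul_of_nonneg_right hcosub hS0,
    mul_le_mul_of_nonneg_right hsinlb hm.le, mul_pos ht0 hm, mul_pos ht0 ht0]

/-- If `U ∈ U(N)` locally maximizes the 1-norm `‖V‖₁ = ∑_{i,j} |V_{ij}|`
on the unitary group, then all entries of `U` are nonzero. -/
theorem stmt1 (N : ℕ) (U : Matrix (Fin N) (Fin N) ℂ)
    (hU : U ∈ Matrix.unitaryGroup (Fin N) ℂ)
    (hmax : ∃ ε > (0 : ℝ), ∀ V ∈ Matrix.unitaryGroup (Fin N) ℂ,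
      (∀ i j, ‖V i j - U i j‖ < ε) →
        ∑ i, ∑ j, ‖V i j‖ ≤ ∑ i, ∑ j, ‖U i j‖) :
    ∀ i j, U i j ≠ 0 := by
  intro i0 j0 h0
  obtain ⟨ε, hε, hloc⟩ := hmax
  -- find a nonzero entry in column j0
  have hcol : ∑ i, (starRingEnd ℂ) (U i j0) * U i j0 = 1 := by
    have h1 := Matrix.mem_unitaryGroup_iff'.mp hU
    have := congrFun (congrFun h1 j0) j0
    simpa [Matrix.mul_apply, Matrix.star_apply, Complex.star_def, Matrix.one_apply] using this
  have hex : ∃ i, U i j0 ≠ 0 := by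
    by_contra h
    push_neg at h
    simp [h] at hcol
  obtain ⟨i1, hy⟩ := hex
  have hne : i1 ≠ i0 := fun h => hy (h ▸ h0)
  have hx0 : ‖U i0 j0‖ = 0 := by simp [h0]
  obtain ⟨m, hmdef⟩ : ∃ m : ℝ, m = ‖U i1 j0‖ := ⟨_, rfl⟩
  have hm : 0 < m := hmdef ▸ norm_pos_iff.mpr hy
  obtain ⟨S, hSdef⟩ : ∃ S : ℝ, S = ∑ j, (‖U i0 j‖ + ‖U i1 j‖) :=
    ⟨_, rfl⟩
  have hS0 : 0 ≤ S := hSdef ▸ Finset.sum_nonneg fun j _ =>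
    add_nonneg (norm_nonneg _) (norm_nonneg _)
  obtain ⟨t, htdef⟩ : ∃ t : ℝ, t = min (min (ε/3) 1) (m/(2*(S+1))) := ⟨_, rfl⟩
  have ht0 : 0 < t := htdef ▸ lt_min (lt_min (by positivity) one_pos) (by positivity)
  have ht1 : t ≤ 1 := htdef ▸ le_trans (min_le_left _ _) (min_le_right _ _)
  have htε : 2*t < ε := by
    have : t ≤ ε/3 := htdef ▸ le_trans (min_le_left _ _) (min_le_left _ _)
    linarith
  have htm : t * (2*(S+1)) ≤ m := by
    have h1 : t ≤ m/(2*(S+1)) := htdef ▸ min_le_right _ _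
    have h2 : (0:ℝ) < 2*(S+1) := by positivity
    calc t * (2*(S+1)) ≤ m/(2*(S+1)) * (2*(S+1)) := by nlinarith
    _ = m := by field_simp
  -- trig facts
  have hπ := Real.pi_gt_three
  have hsin0 : 0 ≤ Real.sin t := Real.sin_nonneg_of_nonneg_of_le_pi ht0.le (by linarith)
  have hsinlb : 3/4 * t ≤ Real.sin t := by
    have h := Real.sin_gt_sub_cube ht0
    have ht3 : t^3 ≤ t := by nlinarith [sq_nonneg t, sq_nonneg (1 - t), mul_pos ht0 ht0]
    linarith
  have hcos0 : 0 ≤ Real.cos t := Real.cos_nonneg_of_mem_Icc ⟨by linarith, by linarith⟩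
  have hcos1 : Real.cos t ≤ 1 := Real.cos_le_one t
  have hcosub : 1 - Real.cos t ≤ t^2 := by
    have h2 := Real.sin_sq_add_cos_sq t
    have h3 : Real.sin t ^ 2 ≤ t ^ 2 := by
      have := Real.abs_sin_le_abs (x := t)
      nlinarith [sq_abs t, sq_abs (Real.sin t), abs_nonneg (Real.sin t), abs_nonneg t]
    nlinarith

  have hUb := entry_le N U hU
  have hVpmem := rotM_mem N U hU i0 i1 hne t
  have hVmmem := rotM_mem N U hU i0 i1 hne (-t)
  have ht2 : t^2 ≤ t := by nlinarith
  -- closeness of rotated matrices to U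
  have hclose : ∀ s : ℝ, Real.cos s = Real.cos t → |Real.sin s| ≤ t →
      ∀ i j, ‖rotM N U i0 i1 s i j - U i j‖ < ε := by
    intro s hc hs i j
    have hcos' : |Real.cos s - 1| ≤ t := by
      rw [hc, abs_sub_comm, abs_of_nonneg (by linarith : (0:ℝ) ≤ 1 - Real.cos t)]
      nlinarith
    by_cases hi0 : i = i0
    · rw [hi0, rotM_i0]
      have he : (Real.cos s : ℂ) * U i0 j + (Real.sin s : ℂ) * U i1 j - U i0 j
          = ((Real.cos s - 1 : ℝ) : ℂ) * U i0 j + ((Real.sin s : ℝ) : ℂ) * U i1 j := by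
        push_cast; ring
      rw [he]
      calc ‖((Real.cos s - 1 : ℝ) : ℂ) * U i0 j + ((Real.sin s : ℝ) : ℂ) * U i1 j‖
          ≤ ‖((Real.cos s - 1 : ℝ) : ℂ) * U i0 j‖
            + ‖((Real.sin s : ℝ) : ℂ) * U i1 j‖ := norm_add_le _ _
        _ = |Real.cos s - 1| * ‖U i0 j‖ + |Real.sin s| * ‖U i1 j‖ := by
            rw [norm_mul, norm_mul, Complex.norm_real, Complex.norm_real, Real.norm_eq_abs, Real.norm_eq_abs]
        _ ≤ t * 1 + t * 1 :=
            add_le_add (mul_le_mul hcos' (hUb i0 j) (norm_nonneg _) ht0.le)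
              (mul_le_mul hs (hUb i1 j) (norm_nonneg _) ht0.le)
        _ < ε := by linarith
    · by_cases hi1 : i = i1
      · rw [hi1, rotM_i1 N U i0 i1 hne]
        have he : (-(Real.sin s : ℂ)) * U i0 j + (Real.cos s : ℂ) * U i1 j - U i1 j
            = ((Real.cos s - 1 : ℝ) : ℂ) * U i1 j + ((-Real.sin s : ℝ) : ℂ) * U i0 j := by
          push_cast; ring
        rw [he]
        calc ‖((Real.cos s - 1 : ℝ) : ℂ) * U i1 j + ((-Real.sin s : ℝ) : ℂ) * U i0 j‖
            ≤ ‖((Real.cos s - 1 : ℝ) : ℂ) * U i1 j‖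
              + ‖((-Real.sin s : ℝ) : ℂ) * U i0 j‖ := norm_add_le _ _
          _ = |Real.cos s - 1| * ‖U i1 j‖ + |Real.sin s| * ‖U i0 j‖ := by
              rw [norm_mul, norm_mul, Complex.norm_real, Complex.norm_real, Real.norm_eq_abs, Real.norm_eq_abs, abs_neg]
          _ ≤ t * 1 + t * 1 :=
              add_le_add (mul_le_mul hcos' (hUb i1 j) (norm_nonneg _) ht0.le)
                (mul_le_mul hs (hUb i0 j) (norm_nonneg _) ht0.le)
          _ < ε := by linarith
      · rw [rotM_other N U i0 i1 s i hi0 hi1, sub_self]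
        simpa using hε
  have hsint : |Real.sin t| ≤ t := by
    rw [abs_of_nonneg hsin0]; exact (Real.sin_lt ht0).le
  have hp := hloc _ hVpmem (hclose t rfl hsint)
  have hq := hloc _ hVmmem (hclose (-t) (Real.cos_neg t)
    (by rw [Real.sin_neg, abs_neg]; exact hsint))
  -- decompose the double sums
  have hdecomp : ∀ W : Matrix (Fin N) (Fin N) ℂ,
      (∀ a, a ≠ i0 → a ≠ i1 → ∀ j, W a j = U a j) →
      ∑ i, ∑ j, ‖W i j‖
        = (∑ i ∈ Finset.univ \ {i0, i1}, ∑ j, ‖U i j‖)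
          + (∑ j, ‖W i0 j‖ + ∑ j, ‖W i1 j‖) := by
    intro W hW
    rw [← Finset.sum_sdiff (Finset.subset_univ ({i0, i1} : Finset (Fin N)))]
    congr 1
    · refine Finset.sum_congr rfl fun a ha => Finset.sum_congr rfl fun j _ => ?_
      simp only [Finset.mem_sdiff, Finset.mem_insert, Finset.mem_singleton] at ha
      rw [hW a (fun h => ha.2 (Or.inl h)) (fun h => ha.2 (Or.inr h))]
    · rw [Finset.sum_pair (Ne.symm hne)]
  have hFU := hdecomp U (fun a _ _ j => rfl)
  have hFp := hdecomp (rotM N U i0 i1 t)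
    (fun a ha0 ha1 j => rotM_other N U i0 i1 t a ha0 ha1 j)
  have hFm := hdecomp (rotM N U i0 i1 (-t))
    (fun a ha0 ha1 j => rotM_other N U i0 i1 (-t) a ha0 ha1 j)
  -- the key pointwise estimate
  have hkey : ∀ j, 2*Real.cos t*(‖U i0 j‖ + ‖U i1 j‖)
      + (if j = j0 then 2*Real.sin t*m else 0)
      ≤ ‖rotM N U i0 i1 t i0 j‖ + ‖rotM N U i0 i1 (-t) i0 j‖
        + ‖rotM N U i0 i1 t i1 j‖ + ‖rotM N U i0 i1 (-t) i1 j‖ := by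
    intro j
    by_cases hj : j = j0
    · simp only [hj, eq_self_iff_true, if_true]
      rw [rotM_i0, rotM_i0, rotM_i1 N U i0 i1 hne, rotM_i1 N U i0 i1 hne]
      simp only [Real.cos_neg, Real.sin_neg, Complex.ofReal_neg, h0, mul_zero, zero_add,
        add_zero, neg_mul, neg_neg, neg_zero, norm_neg, norm_mul, Complex.norm_real, Real.norm_eq_abs,
        abs_of_nonneg hsin0, abs_of_nonneg hcos0, hx0, norm_zero]
      rw [← hmdef]
      nlinarith
    · rw [if_neg hj]
      have hsum0 : rotM N U i0 i1 t i0 j + rotM N U i0 i1 (-t) i0 j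
          = ((2*Real.cos t : ℝ):ℂ) * U i0 j := by
        rw [rotM_i0, rotM_i0, Real.cos_neg, Real.sin_neg]; push_cast; ring
      have hsum1 : rotM N U i0 i1 t i1 j + rotM N U i0 i1 (-t) i1 j
          = ((2*Real.cos t : ℝ):ℂ) * U i1 j := by
        rw [rotM_i1 N U i0 i1 hne, rotM_i1 N U i0 i1 hne, Real.cos_neg, Real.sin_neg]
        push_cast; ring
      have hb0 : 2*Real.cos t * ‖U i0 j‖
          ≤ ‖rotM N U i0 i1 t i0 j‖ + ‖rotM N U i0 i1 (-t) i0 j‖ := by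
        calc 2*Real.cos t * ‖U i0 j‖
            = ‖((2*Real.cos t : ℝ):ℂ) * U i0 j‖ := by
              rw [norm_mul, Complex.norm_real, Real.norm_eq_abs,
                abs_of_nonneg (by linarith : (0:ℝ) ≤ 2*Real.cos t)]
          _ = ‖rotM N U i0 i1 t i0 j + rotM N U i0 i1 (-t) i0 j‖ := by rw [hsum0]
          _ ≤ _ := norm_add_le _ _
      have hb1 : 2*Real.cos t * ‖U i1 j‖
          ≤ ‖rotM N U i0 i1 t i1 j‖ + ‖rotM N U i0 i1 (-t) i1 j‖ := by
        calc 2*Real.cos t * ‖U i1 j‖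
            = ‖((2*Real.cos t : ℝ):ℂ) * U i1 j‖ := by
              rw [norm_mul, Complex.norm_real, Real.norm_eq_abs,
                abs_of_nonneg (by linarith : (0:ℝ) ≤ 2*Real.cos t)]
          _ = ‖rotM N U i0 i1 t i1 j + rotM N U i0 i1 (-t) i1 j‖ := by rw [hsum1]
          _ ≤ _ := norm_add_le _ _
      have hexp : 2*Real.cos t*(‖U i0 j‖ + ‖U i1 j‖) + 0
          = 2*Real.cos t * ‖U i0 j‖ + 2*Real.cos t * ‖U i1 j‖ := by
        ring
      linarith
  -- sum the key estimate over j
  have hsumkey : 2*Real.cos t*S + 2*Real.sin t*m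
      ≤ (∑ j, ‖rotM N U i0 i1 t i0 j‖)
        + (∑ j, ‖rotM N U i0 i1 (-t) i0 j‖)
        + (∑ j, ‖rotM N U i0 i1 t i1 j‖)
        + (∑ j, ‖rotM N U i0 i1 (-t) i1 j‖) := by
    have h1 := Finset.sum_le_sum (fun j (_ : j ∈ (Finset.univ : Finset (Fin N))) => hkey j)
    rw [Finset.sum_add_distrib, Finset.sum_ite_eq' Finset.univ j0, ← Finset.mul_sum] at h1
    simp only [Finset.mem_univ, if_true, Finset.sum_add_distrib] at h1
    rw [hSdef, Finset.sum_add_distrib]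
    linarith
  have hSsplit : S = (∑ j, ‖U i0 j‖) + ∑ j, ‖U i1 j‖ := by
    rw [hSdef, Finset.sum_add_distrib]
  have hfinal : 2*S < 2*Real.cos t*S + 2*Real.sin t*m :=
    arith_final S m t (Real.cos t) (Real.sin t) hS0 hm ht0 htm hsinlb hcosub
  linarith [hp, hq, hFp, hFm, hFU, hsumkey, hSsplit, hfinal]
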